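/- arXiv:2402.05848 — 2 statements merged into one kernel-verified Lean document; each statement's English description precedes it below -/
import Mathlib

section
/- Let q = 5 and let P, Q be collinear simplex points in F^6. Then every point of the set I(⟨I(P), I(Q)⟩) \ {P, Q} is non-collinear to every point of the line ⟨P, Q⟩ distinct from P and Q. -/
open Submodule Module

/-- All columns of the 2×n matrix with rows `x` and `y` are nonzero and pairwise
non-proportional (equivalently, every 2×2 minor is nonzero). -/
def GoodPair {F : Type} [Field F] {n : ℕ} (x y : Fin n → F) : Prop :=
  ∀ i j : Fin n, i ≠ j → x i * y j ≠ x j * y i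

/-- A simplex line: a 2-dimensional subspace spanned by the rows of a generator
matrix all of whose columns are nonzero and pairwise non-proportional. -/
def IsSimplexLine {F : Type} [Field F] {n : ℕ} (C : Submodule F (Fin n → F)) : Prop :=
  ∃ x y : Fin n → F, GoodPair x y ∧ C = span F {x, y}

/-- A simplex point: a 1-dimensional subspace spanned by a vector with exactly
one zero coordinate. -/
def IsSimplexPoint {F : Type} [Field F] {n : ℕ} (P : Submodule F (Fin n → F)) : Prop :=
  ∃ x : Fin n → F, (∃! i, x i = 0) ∧ P = span F {x}

/-- Two simplex points are collinear: they are spanned by the two rows of a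
generator matrix of a simplex code, i.e. there is a simplex line containing both. -/
def PtCollinear {F : Type} [Field F] {n : ℕ} (P Q : Submodule F (Fin n → F)) : Prop :=
  ∃ x y : Fin n → F, GoodPair x y ∧ P = span F {x} ∧ Q = span F {y}

/-- A clique of the graph Γ of simplex lines: all members are simplex lines and
any two distinct members intersect in a 1-dimensional subspace. -/
def IsGammaClique {F : Type} [Field F] {n : ℕ} (T : Set (Submodule F (Fin n → F))) : Prop :=
  (∀ L ∈ T, IsSimplexLine L) ∧
    ∀ L ∈ T, ∀ L' ∈ T, L ≠ L' → finrank F ↥(L ⊓ L') = 1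

/-- A top of Γ: a maximal clique of Γ consisting of all simplex lines contained
in a fixed 3-dimensional subspace (projective plane). -/
def IsGammaTop {F : Type} [Field F] {n : ℕ} (T : Set (Submodule F (Fin n → F))) : Prop :=
  IsGammaClique T ∧ (∀ T' : Set (Submodule F (Fin n → F)), IsGammaClique T' → T ⊆ T' → T' = T) ∧
    ∃ W : Submodule F (Fin n → F), finrank F ↥W = 3 ∧
      T = {L | IsSimplexLine L ∧ L ≤ W}

/-- A monomial linear automorphism: `x ↦ (a₁ x_{σ(1)}, …, aₙ x_{σ(n)})` with all
`aᵢ` nonzero and `σ` a permutation. -/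
def IsMonomial {F : Type} [Field F] {n : ℕ} (l : (Fin n → F) ≃ₗ[F] (Fin n → F)) : Prop :=
  ∃ (a : Fin n → F) (σ : Equiv.Perm (Fin n)),
    (∀ i, a i ≠ 0) ∧ ∀ (x : Fin n → F) (i : Fin n), l x i = a i * x (σ i)

/-- Coordinatewise inversion `I` (with `0⁻¹ = 0`). -/
def vecInv {F : Type} [Field F] {n : ℕ} (x : Fin n → F) : Fin n → F := fun i => (x i)⁻¹

instance : Fact (Nat.Prime 5) := ⟨by norm_num⟩


lemma zmod5_inv_eq_pow3 (a : ZMod 5) : a⁻¹ = a^3 := by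
  have key : ∀ b : ZMod 5, b ≠ 0 → b * b^3 = 1 := by decide
  rcases eq_or_ne a 0 with h | h
  · subst h
    rw [inv_zero]; ring
  · have h1 : a * a⁻¹ = 1 := mul_inv_cancel₀ h
    exact mul_left_cancel₀ h (h1.trans (key a h).symm)

lemma core5 : ∀ e f c d : ZMod 5, e ≠ 0 → f ≠ 0 → c ≠ 0 → d ≠ 0 →
    (f⁻¹ * c = e⁻¹ * d) ∨
    (∃ r : ZMod 5, r ≠ 0 ∧ f⁻¹ * (c + d*r) = d * (r * (e*r+f)⁻¹)) ∨
    (∃ r : ZMod 5, r ≠ 0 ∧ e⁻¹ * (c + d*r) = c * (r * (e*r+f)⁻¹)) ∨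
    (∃ r r' : ZMod 5, r ≠ 0 ∧ r' ≠ 0 ∧ r ≠ r' ∧
      (r * (e*r+f)⁻¹) * (c + d*r') = (r' * (e*r'+f)⁻¹) * (c + d*r)) := by
  simp only [zmod5_inv_eq_pow3]
  decide

/-- For q = 5 and collinear simplex points P = ⟨x⟩, Q = ⟨y⟩, every point of
I(⟨I(P),I(Q)⟩) \ {P,Q} is non-collinear to every point of the line ⟨P,Q⟩
distinct from P and Q. -/
theorem inv_line_points_noncollinear (x y : Fin 6 → ZMod 5)
    (hx : ∃! i, x i = 0) (hy : ∃! i, y i = 0) (hxy : GoodPair x y) :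
    ∀ R ∈ ({R : Submodule (ZMod 5) (Fin 6 → ZMod 5) |
        ∃ z : Fin 6 → ZMod 5, z ≠ 0 ∧ z ∈ span (ZMod 5) {vecInv x, vecInv y} ∧
          R = span (ZMod 5) {vecInv z}} \ {span (ZMod 5) {x}, span (ZMod 5) {y}}),
      ∀ w : Fin 6 → ZMod 5, w ≠ 0 → w ∈ span (ZMod 5) {x, y} →
        span (ZMod 5) {w} ≠ span (ZMod 5) {x} → span (ZMod 5) {w} ≠ span (ZMod 5) {y} →
        ¬ PtCollinear R (span (ZMod 5) {w})  := by
  obtain ⟨i0, hxi0, hxuq⟩ := hx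
  obtain ⟨j0, hyj0, hyuq⟩ := hy
  have hxne : ∀ i, i ≠ i0 → x i ≠ 0 := fun i hi h => hi (hxuq i h)
  have hyne : ∀ i, i ≠ j0 → y i ≠ 0 := fun i hi h => hi (hyuq i h)
  have hij0 : i0 ≠ j0 := by
    intro h
    obtain ⟨j, hj⟩ := exists_ne i0
    have h1 : y i0 = 0 := by rw [h, hyj0]
    exact hxy j i0 hj (by rw [hxi0, h1]; ring)
  intro R hR w hw0 hwmem hwx hwy hcol
  obtain ⟨⟨z, hz0, hzmem, hRz⟩, hRnot⟩ := hR
  simp only [Set.mem_insert_iff, Set.mem_singleton_iff, not_or] at hRnot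
  obtain ⟨hRx, hRy⟩ := hRnot
  obtain ⟨e, f, hz⟩ := Submodule.mem_span_pair.mp hzmem
  obtain ⟨c, d, hw⟩ := Submodule.mem_span_pair.mp hwmem
  have hzc : ∀ i, z i = e * (x i)⁻¹ + f * (y i)⁻¹ := by
    intro i; rw [← hz]; simp [vecInv]
  have hwc : ∀ i, w i = c * x i + d * y i := by
    intro i; rw [← hw]; simp
  -- f ≠ 0
  have hf : f ≠ 0 := by
    intro hf
    have he0 : e ≠ 0 := by
      intro he0
      apply hz0
      funext i; show z i = (0 : ZMod 5); rw [hzc i, hf, he0]; ring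
    apply hRx
    have : vecInv z = e⁻¹ • x := by
      funext i
      show (z i)⁻¹ = e⁻¹ * x i
      rw [hzc i, hf, zero_mul, add_zero, mul_inv, inv_inv]
    rw [hRz, this, Submodule.span_singleton_smul_eq (isUnit_iff_ne_zero.mpr (inv_ne_zero he0)) x]
  have he : e ≠ 0 := by
    intro he
    have hf0 : f ≠ 0 := hf
    apply hRy
    have : vecInv z = f⁻¹ • y := by
      funext i
      show (z i)⁻¹ = f⁻¹ * y i
      rw [hzc i, he, zero_mul, zero_add, mul_inv, inv_inv]
    rw [hRz, this, Submodule.span_singleton_smul_eq (isUnit_iff_ne_zero.mpr (inv_ne_zero hf0)) y]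
  -- c ≠ 0 and d ≠ 0
  have hd : d ≠ 0 := by
    intro hd
    have hc0 : c ≠ 0 := by
      intro hc0; apply hw0; funext i; show w i = (0 : ZMod 5)
      rw [hwc i, hd, hc0]; ring
    apply hwx
    have : w = c • x := by funext i; rw [hwc i, hd]; show _ = c * x i; ring
    rw [this, Submodule.span_singleton_smul_eq (isUnit_iff_ne_zero.mpr hc0) x]
  have hc : c ≠ 0 := by
    intro hc
    apply hwy
    have : w = d • y := by funext i; rw [hwc i, hc]; show _ = d * y i; ring
    rw [this, Submodule.span_singleton_smul_eq (isUnit_iff_ne_zero.mpr hd) y]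
  -- surjectivity of the ratio map onto nonzero scalars
  have hsurj : ∀ r : ZMod 5, r ≠ 0 → ∃ i, i ≠ i0 ∧ i ≠ j0 ∧ y i = r * x i := by
    intro r hr
    classical
    set s : Finset (Fin 6) := (Finset.univ.erase j0).erase i0 with hs
    have hcs : s.card = 4 := by
      rw [hs, Finset.card_erase_of_mem (by simp [Finset.mem_erase, hij0]),
        Finset.card_erase_of_mem (by simp)]
      simp
    set ρ : Fin 6 → ZMod 5 := fun i => y i * (x i)⁻¹ with hρ
    have hmem : ∀ i ∈ s, i ≠ i0 ∧ i ≠ j0 := by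
      intro i hi
      rw [hs, Finset.mem_erase, Finset.mem_erase] at hi
      exact ⟨hi.1, hi.2.1⟩
    have hinj : Set.InjOn ρ s := by
      intro i hi j hj hρij
      by_contra hne
      have hi' := hmem i (by simpa using hi)
      have hj' := hmem j (by simpa using hj)
      apply hxy i j hne
      have hxi := hxne i hi'.1
      have hxj := hxne j hj'.1
      simp only [hρ] at hρij
      field_simp at hρij
      linear_combination -hρij
    have hsub : s.image ρ ⊆ Finset.univ.erase (0 : ZMod 5) := by
      intro r' hr'
      rw [Finset.mem_image] at hr'
      obtain ⟨i, hi, hρi⟩ := hr'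
      have hi' := hmem i hi
      rw [Finset.mem_erase]
      refine ⟨?_, Finset.mem_univ _⟩
      rw [← hρi, hρ]
      exact mul_ne_zero (hyne i hi'.2) (inv_ne_zero (hxne i hi'.1))
    have hcard : (Finset.univ.erase (0 : ZMod 5)).card ≤ (s.image ρ).card := by
      rw [Finset.card_image_of_injOn hinj, hcs,
        Finset.card_erase_of_mem (Finset.mem_univ _)]
      simp
    have heq := Finset.eq_of_subset_of_card_le hsub hcard
    have hrmem : r ∈ s.image ρ := by
      rw [heq, Finset.mem_erase]; exact ⟨hr, Finset.mem_univ _⟩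
    rw [Finset.mem_image] at hrmem
    obtain ⟨i, hi, hρi⟩ := hrmem
    have hi' := hmem i hi
    refine ⟨i, hi'.1, hi'.2, ?_⟩
    have hxi := hxne i hi'.1
    have h2 : y i * (x i)⁻¹ = r := hρi
    rw [← h2, mul_assoc, inv_mul_cancel₀ hxi, mul_one]
  -- coordinate formulas
  have hgenz : ∀ i r, i ≠ i0 → r ≠ 0 → y i = r * x i →
      (z i)⁻¹ = x i * (r * (e*r+f)⁻¹) := by
    intro i r hi hr hyi
    have hxi := hxne i hi
    have h1 : z i = (e*r+f) * ((x i)⁻¹ * r⁻¹) := by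
      rw [hzc i, hyi, mul_inv]
      field_simp
    rw [h1, mul_inv, mul_inv, inv_inv, inv_inv]
    ring
  have hgenw : ∀ i r, y i = r * x i → w i = x i * (c + d*r) := by
    intro i r hyi
    rw [hwc i, hyi]; ring
  have hzi0 : (z i0)⁻¹ = f⁻¹ * y i0 := by
    rw [hzc i0, hxi0, inv_zero, mul_zero, zero_add, mul_inv, inv_inv]
  have hwi0 : w i0 = d * y i0 := by rw [hwc i0, hxi0]; ring
  have hzj0 : (z j0)⁻¹ = e⁻¹ * x j0 := by
    rw [hzc j0, hyj0, inv_zero, mul_zero, add_zero, mul_inv, inv_inv]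
  have hwj0 : w j0 = c * x j0 := by rw [hwc j0, hyj0]; ring
  -- find a vanishing minor
  have key : ∃ i j : Fin 6, i ≠ j ∧ (z i)⁻¹ * w j = (z j)⁻¹ * w i := by
    rcases core5 e f c d he hf hc hd with hA | ⟨r, hr, hB⟩ | ⟨r, hr, hC⟩ |
      ⟨r, r', hr, hr', hrr', hD⟩
    · refine ⟨i0, j0, hij0, ?_⟩
      rw [hzi0, hwj0, hzj0, hwi0]
      linear_combination (y i0 * x j0) * hA
    · obtain ⟨j, hj1, hj2, hyj⟩ := hsurj r hr
      refine ⟨i0, j, Ne.symm hj1, ?_⟩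
      rw [hzi0, hgenw j r hyj, hgenz j r hj1 hr hyj, hwi0]
      linear_combination (y i0 * x j) * hB
    · obtain ⟨j, hj1, hj2, hyj⟩ := hsurj r hr
      refine ⟨j0, j, Ne.symm hj2, ?_⟩
      rw [hzj0, hgenw j r hyj, hgenz j r hj1 hr hyj, hwj0]
      linear_combination (x j0 * x j) * hC
    · obtain ⟨i, hi1, hi2, hyi⟩ := hsurj r hr
      obtain ⟨j, hj1, hj2, hyj⟩ := hsurj r' hr'
      have hij : i ≠ j := by
        intro h
        apply hrr'
        rw [h] at hyi
        exact mul_right_cancel₀ (hxne j hj1) (hyi.symm.trans hyj)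
      refine ⟨i, j, hij, ?_⟩
      rw [hgenz i r hi1 hr hyi, hgenz j r' hj1 hr' hyj,
        hgenw i r hyi, hgenw j r' hyj]
      linear_combination (x i * x j) * hD
  obtain ⟨i, j, hijne, hminor⟩ := key
  -- derive the contradiction with PtCollinear
  obtain ⟨u, v, huv, hRu, hwv⟩ := hcol
  have hIz0 : vecInv z ≠ 0 := by
    obtain ⟨i', hi'⟩ := Function.ne_iff.mp hz0
    intro h
    exact inv_ne_zero (by simpa using hi') (congrFun h i')
  have h1 : vecInv z ∈ Submodule.span (ZMod 5) {u} := by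
    rw [← hRu, hRz]; exact Submodule.mem_span_singleton_self _
  obtain ⟨t, htu⟩ := Submodule.mem_span_singleton.mp h1
  have ht : t ≠ 0 := by
    intro h; rw [h, zero_smul] at htu; exact hIz0 htu.symm
  have h2 : w ∈ Submodule.span (ZMod 5) {v} := by
    rw [← hwv]; exact Submodule.mem_span_singleton_self _
  obtain ⟨s, hsv⟩ := Submodule.mem_span_singleton.mp h2
  have hsne : s ≠ 0 := by
    intro h; rw [h, zero_smul] at hsv; exact hw0 hsv.symm
  apply huv i j hijne
  have hui : t * u i = (z i)⁻¹ := congrFun htu i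
  have huj : t * u j = (z j)⁻¹ := congrFun htu j
  have hvi : s * v i = w i := congrFun hsv i
  have hvj : s * v j = w j := congrFun hsv j
  have : (t * s) * (u i * v j) = (t * s) * (u j * v i) := by
    calc (t * s) * (u i * v j) = (t * u i) * (s * v j) := by ring
    _ = (z i)⁻¹ * w j := by rw [hui, hvj]
    _ = (z j)⁻¹ * w i := hminor
    _ = (t * u j) * (s * v i) := by rw [huj, hvi]
    _ = (t * s) * (u j * v i) := by ring
  exact mul_left_cancel₀ (mul_ne_zero ht hsne) this
end

section
/- Let q ≥ 5 be a prime power. For every simplex point P in F^(q+1), the hyperplane H(P) contains a simplex point Q which is distinct from P and non-collinear to P. -/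
open Submodule Module

/-- For q ≥ 5 and every simplex point P = ⟨x⟩, the hyperplane H(P) contains a
simplex point Q distinct from P and non-collinear to P. -/
theorem hyperplane_contains_noncollinear_point (F : Type) [Field F] [Fintype F]
    (hq : 5 ≤ Fintype.card F)
    (x : Fin (Fintype.card F + 1) → F) (hx : ∃! i, x i = 0) :
    ∃ y : Fin (Fintype.card F + 1) → F, (∃! i, y i = 0) ∧
      span F {y} ≠ span F {x} ∧
      ¬ PtCollinear (span F {x}) (span F {y}) ∧
      ∑ i, (x i)⁻¹ * y i = 0 := by
  classical
  obtain ⟨i₀, hxi₀, huniq⟩ := hx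
  have hxne : ∀ i, i ≠ i₀ → x i ≠ 0 := fun i hi h => hi (huniq i h)
  -- pick j ≠ k, both ≠ i₀
  have hcard : Fintype.card (Fin (Fintype.card F + 1)) = Fintype.card F + 1 := by simp
  obtain ⟨j, hj, k, hk, hjk⟩ : ∃ j ∈ ({i₀}ᶜ : Finset (Fin (Fintype.card F + 1))),
      ∃ k ∈ ({i₀}ᶜ : Finset (Fin (Fintype.card F + 1))), j ≠ k := by
    apply Finset.one_lt_card.mp
    rw [Finset.card_compl, Finset.card_singleton, hcard]
    omega
  rw [Finset.mem_compl, Finset.mem_singleton] at hj hk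
  -- pick a ∉ {0,1,2}
  obtain ⟨a, ha⟩ : ∃ a : F, a ∉ ({0, 1, 2} : Finset F) := by
    by_contra h
    push_neg at h
    have h2 : (Finset.univ : Finset F) ⊆ {0, 1, 2} := fun b _ => h b
    have := Finset.card_le_card h2
    have h3 : ({0, 1, 2} : Finset F).card ≤ 3 := by
      apply le_trans (Finset.card_insert_le _ _)
      simp [Finset.card_insert_le]
      exact Nat.succ_le_succ (le_trans (Finset.card_insert_le _ _) (by simp))
    rw [Finset.card_univ] at this
    omega
  simp only [Finset.mem_insert, Finset.mem_singleton, not_or] at ha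
  obtain ⟨ha0, ha1, ha2⟩ := ha
  -- pick m ∉ {i₀, j, k}
  obtain ⟨m, hm⟩ : ∃ m : Fin (Fintype.card F + 1), m ∉ ({i₀, j, k} : Finset (Fin (Fintype.card F + 1))) := by
    by_contra h
    push_neg at h
    have h2 : (Finset.univ : Finset (Fin (Fintype.card F + 1))) ⊆ {i₀, j, k} := fun b _ => h b
    have := Finset.card_le_card h2
    have h3 : ({i₀, j, k} : Finset (Fin (Fintype.card F + 1))).card ≤ 3 :=
      le_trans (Finset.card_insert_le _ _) (by
        exact Nat.succ_le_succ (le_trans (Finset.card_insert_le _ _) (by simp)))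
    rw [Finset.card_univ, hcard] at this
    omega
  simp only [Finset.mem_insert, Finset.mem_singleton, not_or] at hm
  obtain ⟨hmi₀, hmj, hmk⟩ := hm
  set y : Fin (Fintype.card F + 1) → F :=
    fun i => if i = j then a * x j else if i = k then (2 - a) * x k else x i with hy
  have hyj : y j = a * x j := by simp [hy]
  have hyk : y k = (2 - a) * x k := by simp [hy, hjk.symm]
  have hyo : ∀ i, i ≠ j → i ≠ k → y i = x i := by
    intro i h1 h2; simp [hy, h1, h2]
  have hyi₀ : y i₀ = 0 := by rw [hyo i₀ (Ne.symm hj) (Ne.symm hk)]; exact hxi₀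
  refine ⟨y, ⟨i₀, hyi₀, ?_⟩, ?_, ?_, ?_⟩
  · -- uniqueness of zero coordinate
    intro i hi
    by_cases h1 : i = j
    · rw [h1, hyj] at hi
      exact absurd hi (mul_ne_zero ha0 (hxne j hj))
    by_cases h2 : i = k
    · rw [h2, hyk] at hi
      exact absurd hi (mul_ne_zero (sub_ne_zero.mpr (Ne.symm ha2)) (hxne k hk))
    · rw [hyo i h1 h2] at hi
      exact huniq i hi
  · -- spans differ
    intro h
    have hmem : y ∈ span F ({x} : Set (Fin (Fintype.card F + 1) → F)) := by
      rw [← h]; exact mem_span_singleton_self y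
    obtain ⟨c, hc⟩ := mem_span_singleton.mp hmem
    have hcm : c * x m = x m := by
      have := congrFun hc m
      simpa [hyo m hmj hmk] using this
    have hc1 : c = 1 := mul_right_cancel₀ (hxne m hmi₀) (by rw [hcm, one_mul])
    have hcj : c * x j = a * x j := by
      have := congrFun hc j
      simpa [hyj] using this
    rw [hc1, one_mul] at hcj
    exact ha1 (mul_right_cancel₀ (hxne j hj) (by rw [← hcj, one_mul])).symm
  · -- non-collinear
    rintro ⟨x', y', hgp, hPx, hPy⟩
    have hx' : x' ∈ span F ({x} : Set (Fin (Fintype.card F + 1) → F)) := by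
      rw [hPx]; exact mem_span_singleton_self x'
    obtain ⟨c, hc⟩ := mem_span_singleton.mp hx'
    have hy' : y' ∈ span F ({y} : Set (Fin (Fintype.card F + 1) → F)) := by
      rw [hPy]; exact mem_span_singleton_self y'
    obtain ⟨d, hd⟩ := mem_span_singleton.mp hy'
    have hx'i₀ : x' i₀ = 0 := by
      rw [← hc]; simp [hxi₀]
    have hy'i₀ : y' i₀ = 0 := by
      rw [← hd]; simp [hyi₀]
    exact hgp i₀ j (Ne.symm hj) (by rw [hx'i₀, hy'i₀]; ring)
  · -- the sum vanishes
    have key : ∀ i : Fin (Fintype.card F + 1), (x i)⁻¹ * y i =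
        1 + ((if i = j then a - 1 else 0) + (if i = k then 1 - a else 0) +
          (if i = i₀ then (-1 : F) else 0)) := by
      intro i
      by_cases h1 : i = j
      · rw [h1, hyj, if_pos rfl, if_neg hjk, if_neg hj,
          mul_comm (x j)⁻¹, mul_assoc, mul_inv_cancel₀ (hxne j hj)]
        ring
      by_cases h2 : i = k
      · rw [h2, hyk, if_neg (h2 ▸ h1 : k ≠ j), if_pos rfl, if_neg hk,
          mul_comm (x k)⁻¹, mul_assoc, mul_inv_cancel₀ (hxne k hk)]
        ring
      by_cases h3 : i = i₀
      · rw [h3, hyi₀, hxi₀, if_neg (h3 ▸ h1 : i₀ ≠ j), if_neg (h3 ▸ h2 : i₀ ≠ k), if_pos rfl]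
        ring
      · rw [hyo i h1 h2, if_neg h1, if_neg h2, if_neg h3, inv_mul_cancel₀ (hxne i h3)]
        ring
    rw [Finset.sum_congr rfl (fun i _ => key i)]
    rw [Finset.sum_add_distrib, Finset.sum_add_distrib, Finset.sum_add_distrib,
      Finset.sum_ite_eq' Finset.univ j (fun _ => a - 1),
      Finset.sum_ite_eq' Finset.univ k (fun _ => 1 - a),
      Finset.sum_ite_eq' Finset.univ i₀ (fun _ => (-1 : F)),
      Finset.sum_const, Finset.card_univ, hcard]
    have hcF : ((Fintype.card F : ℕ) : F) = 0 := Nat.cast_card_eq_zero F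
    simp only [Finset.mem_univ, if_pos, nsmul_eq_mul, mul_one]
    push_cast
    rw [hcF]
    ring
end
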